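/- Let k be a field, l ≥ 0 an integer, R = k[X]/(X^{l+1}), N = R² the free R-module with standard basis (e₁, e₂), and N₁ = R·e₁ + R·(X e₂) the R-submodule of pairs whose second coordinate lies in the ideal (X). For R-submodules L ⊆ L′ of N the following are equivalent: (a) dim_k L = l+1, dim_k L′ = l+2, the quotients N/L and N/L′ are cyclic R-modules, and L is not contained in N₁; (b) there exist scalars a₀, …, a_l ∈ k such that L = R·v and L′ = L + k·(X^l e₁), where v = e₂ + (a₀ + a₁X + ⋯ + a_l X^l)·e₁. Moreover, in case (b) the scalars a₀, …, a_l are uniquely determined by the pair (L, L′), and L′ is uniquely determined by L. -/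

import Mathlib

set_option synthInstance.maxHeartbeats 1000000
set_option maxHeartbeats 2000000

namespace ADLV

variable (k : Type*) [Field k] (l : ℕ)

/-- The ring `R = k[X]/(X^(l+1))`. -/
abbrev Rq := Polynomial k ⧸ Ideal.span {(Polynomial.X : Polynomial k) ^ (l + 1)}

/-- The free module `N = R²`. -/
abbrev Nq := Rq k l × Rq k l

/-- The class of `X` in `R`. -/
noncomputable def Xq : Rq k l := Ideal.Quotient.mk _ Polynomial.X

/-- The first standard basis vector `e₁ = (1,0)`. -/
noncomputable def e₁ : Nq k l := (1, 0)

/-- The second standard basis vector `e₂ = (0,1)`. -/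
noncomputable def e₂ : Nq k l := (0, 1)

/-- The submodule `N₁ = R·e₁ + R·(X e₂)` of pairs whose second coordinate lies
in the ideal `(X)`. -/
noncomputable def N₁ : Submodule (Rq k l) (Nq k l) :=
  Submodule.span (Rq k l) {e₁ k l, Xq k l • e₂ k l}

/-- The vector `v = e₂ + (a₀ + a₁X + ⋯ + a_lX^l)·e₁` attached to scalars
`a₀, …, a_l ∈ k`. -/
noncomputable def vq (a : Fin (l + 1) → k) : Nq k l :=
  e₂ k l + (∑ i : Fin (l + 1), a i • Xq k l ^ (i : ℕ)) • e₁ k l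

/-! ### Auxiliary lemmas -/

open Polynomial

/-- The quotient map `k[X] → R`. -/
noncomputable def mkq : Polynomial k →+* Rq k l := Ideal.Quotient.mk _

variable {k l}

lemma mkq_surj : Function.Surjective (mkq k l) := Ideal.Quotient.mk_surjective

lemma mkq_eq_zero {q : k[X]} : mkq k l q = 0 ↔ X ^ (l+1) ∣ q :=
  Ideal.Quotient.eq_zero_iff_dvd _ _

lemma mkq_pow (n : ℕ) : Xq k l ^ n = mkq k l (X ^ n) := by
  simp [Xq, mkq, map_pow]

lemma Xq_pow_top : Xq k l ^ (l+1) = 0 := by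
  rw [mkq_pow, mkq_eq_zero]

lemma Xq_pow_l_ne : Xq k l ^ l ≠ 0 := by
  rw [mkq_pow, Ne, mkq_eq_zero]
  intro h
  have := Polynomial.natDegree_le_of_dvd h (pow_ne_zero _ Polynomial.X_ne_zero)
  simp at this

lemma smul_mkq (c : k) (q : k[X]) : c • mkq k l q = mkq k l (Polynomial.C c * q) := by
  have := AdjoinRoot.smul_mk ((X : k[X]) ^ (l+1)) c q
  rw [Polynomial.smul_eq_C_mul] at this
  exact this

lemma span_eq_pow (d : Rq k l) : ∃ j ≤ l + 1, Ideal.span {d} = Ideal.span {Xq k l ^ j} := by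
  obtain ⟨q, rfl⟩ := mkq_surj d
  classical
  obtain ⟨j, hj, hassoc⟩ := (dvd_prime_pow Polynomial.prime_X (l+1)).mp
    (gcd_dvd_right q (X ^ (l+1)))
  refine ⟨j, hj, ?_⟩
  have hspan : Ideal.span {q, X ^ (l+1)} = Ideal.span {(X : k[X]) ^ j} := by
    rw [← span_gcd, Ideal.span_singleton_eq_span_singleton.mpr hassoc]
  have := congrArg (Ideal.map (mkq k l)) hspan
  rw [Ideal.map_span, Ideal.map_span, Set.image_pair, Set.image_singleton,
    show mkq k l (X ^ (l+1)) = 0 from mkq_eq_zero.mpr dvd_rfl, ← mkq_pow,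
    Ideal.span_insert] at this
  rwa [show (Ideal.span {(0 : Rq k l)}) = ⊥ from Ideal.span_singleton_eq_bot.mpr rfl,
    sup_bot_eq] at this

lemma exists_mul_Xl {d : Rq k l} (hd : d ≠ 0) : ∃ r, r * d = Xq k l ^ l := by
  obtain ⟨j, hj, hspan⟩ := span_eq_pow d
  have hjl : j ≤ l := by
    rcases Nat.lt_or_ge j (l+1) with h | h
    · omega
    · exfalso; apply hd
      have : d ∈ Ideal.span {d} := Ideal.mem_span_singleton_self d
      rw [hspan] at this
      obtain ⟨r, hr⟩ := Ideal.mem_span_singleton'.mp this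
      have hje : j = l + 1 := by omega
      rw [hje, Xq_pow_top, mul_zero] at hr
      exact hr.symm
  have : Xq k l ^ l ∈ Ideal.span {d} := by
    rw [hspan, Ideal.mem_span_singleton']
    exact ⟨Xq k l ^ (l - j), by rw [← pow_add]; congr 1; omega⟩
  exact Ideal.mem_span_singleton'.mp this

lemma exists_inv {d : Rq k l} (hd : d ∉ Ideal.span {Xq k l}) : ∃ r, r * d = 1 := by
  obtain ⟨j, hj, hspan⟩ := span_eq_pow d
  have hj0 : j = 0 := by
    by_contra h
    obtain ⟨j, rfl⟩ := Nat.exists_eq_succ_of_ne_zero h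
    apply hd
    have : d ∈ Ideal.span {d} := Ideal.mem_span_singleton_self d
    rw [hspan, Ideal.mem_span_singleton'] at this
    obtain ⟨r, hr⟩ := this
    rw [Ideal.mem_span_singleton']
    exact ⟨r * Xq k l ^ j, by rw [mul_assoc, ← pow_succ]; exact hr⟩
  rw [hj0, pow_zero, Ideal.span_singleton_one] at hspan
  have : (1 : Rq k l) ∈ Ideal.span {d} := by rw [hspan]; trivial
  exact Ideal.mem_span_singleton'.mp this

lemma coeff_aux (a : ℕ → k) (d : ℕ) (hd : d < l+1) :
    (∑ i ∈ Finset.range (l+1), C (a i) * X ^ i).coeff d = a d := by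
  rw [Polynomial.finset_sum_coeff]
  simp only [Polynomial.coeff_C_mul, Polynomial.coeff_X_pow, mul_ite, mul_one, mul_zero]
  rw [Finset.sum_ite_eq (Finset.range (l+1)) d a]
  simp [hd]

lemma fin_sum_eq (c : Fin (l+1) → k) (c' : ℕ → k) (hc : ∀ i : Fin (l+1), c' i = c i) :
    (∑ i : Fin (l+1), c i • Xq k l ^ (i : ℕ)) =
      mkq k l (∑ i ∈ Finset.range (l+1), C (c' i) * X ^ i) := by
  rw [map_sum]
  have : ∀ i ∈ Finset.range (l+1), mkq k l (C (c' i) * X ^ i) = c' i • Xq k l ^ i := by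
    intro i _
    rw [← smul_mkq, ← mkq_pow]
  rw [Finset.sum_congr rfl this, ← Fin.sum_univ_eq_sum_range (fun i => c' i • Xq k l ^ i)]
  exact Finset.sum_congr rfl (fun i _ => by rw [hc i])

lemma sum_repr (r : Rq k l) : ∃ a : Fin (l+1) → k,
    r = ∑ i : Fin (l+1), a i • Xq k l ^ (i : ℕ) := by
  obtain ⟨q, rfl⟩ := mkq_surj r
  classical
  refine ⟨fun i => q.coeff i, ?_⟩
  rw [fin_sum_eq (fun i => q.coeff (i : ℕ)) (fun i => q.coeff i) (fun i => rfl)]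
  rw [← sub_eq_zero, ← map_sub, mkq_eq_zero, Polynomial.X_pow_dvd_iff]
  intro d hd
  rw [Polynomial.coeff_sub, coeff_aux _ _ hd, sub_self]

lemma repr_inj {a b : Fin (l+1) → k}
    (h : (∑ i : Fin (l+1), a i • Xq k l ^ (i : ℕ)) =
      ∑ i : Fin (l+1), b i • Xq k l ^ (i : ℕ)) : a = b := by
  classical
  set a' : ℕ → k := fun i => if h : i < l+1 then a ⟨i, h⟩ else 0 with ha'
  set b' : ℕ → k := fun i => if h : i < l+1 then b ⟨i, h⟩ else 0 with hb'
  rw [fin_sum_eq a a' (fun i => by simp [ha', i.is_lt, Fin.is_le]),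
      fin_sum_eq b b' (fun i => by simp [hb', i.is_lt, Fin.is_le]),
      ← sub_eq_zero, ← map_sub, mkq_eq_zero, Polynomial.X_pow_dvd_iff] at h
  funext i
  have := h i i.is_lt
  rw [Polynomial.coeff_sub, coeff_aux _ _ i.is_lt, coeff_aux _ _ i.is_lt, sub_eq_zero] at this
  simpa [ha', hb', i.is_lt, Fin.is_le] using this

lemma one_not_mem_span_Xq : (1 : Rq k l) ∉ Ideal.span {Xq k l} := by
  intro h
  rw [Ideal.mem_span_singleton'] at h
  obtain ⟨r, hr⟩ := h
  obtain ⟨q, rfl⟩ := mkq_surj r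
  have h0 : mkq k l (q * X - 1) = 0 := by
    rw [map_sub, map_mul, map_one, sub_eq_zero]; exact hr
  rw [mkq_eq_zero] at h0
  have hX : (X : k[X]) ∣ 1 := by
    have h1 : (X : k[X]) ∣ q * X - 1 := dvd_trans (dvd_pow_self X (Nat.succ_ne_zero l)) h0
    have h2 : (X : k[X]) ∣ q * X := Dvd.intro_left q rfl
    simpa using dvd_sub h2 h1
  rw [Polynomial.X_dvd_iff] at hX
  simp at hX

lemma smul_Xl (r : Rq k l) : ∃ c : k, r * Xq k l ^ l = c • Xq k l ^ l := by
  obtain ⟨q, rfl⟩ := mkq_surj r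
  refine ⟨q.coeff 0, ?_⟩
  have hdvd : X ^ (l+1) ∣ (q - C (q.coeff 0)) * X ^ l := by
    rw [pow_succ']
    exact mul_dvd_mul (Polynomial.X_dvd_iff.mpr (by simp)) dvd_rfl
  have h0 : mkq k l ((q - C (q.coeff 0)) * X ^ l) = 0 := mkq_eq_zero.mpr hdvd
  rw [map_mul, map_sub, sub_mul, sub_eq_zero] at h0
  rw [mkq_pow, h0, smul_mkq, map_mul]

lemma finrank_Rq : Module.finrank k (Rq k l) = l + 1 := by
  have h := (AdjoinRoot.powerBasis
    (f := (X : k[X]) ^ (l+1)) (pow_ne_zero _ Polynomial.X_ne_zero)).finrank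
  rw [AdjoinRoot.powerBasis_dim, Polynomial.natDegree_X_pow] at h
  exact h

instance : FiniteDimensional k (Rq k l) := by
  have pb := AdjoinRoot.powerBasis (f := (X : k[X]) ^ (l+1)) (pow_ne_zero _ Polynomial.X_ne_zero)
  exact FiniteDimensional.of_finrank_eq_succ finrank_Rq

/-! ### Module-level lemmas -/

/-- The polynomial `a₀ + ⋯ + a_l X^l` in `R`. -/
noncomputable def pA (a : Fin (l + 1) → k) : Rq k l := ∑ i : Fin (l + 1), a i • Xq k l ^ (i : ℕ)

lemma vq_eq (a : Fin (l + 1) → k) : vq k l a = (pA a, 1) := by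
  simp [vq, e₁, e₂, pA, Prod.ext_iff]

lemma smul_vq (r : Rq k l) (a : Fin (l + 1) → k) : r • vq k l a = (r * pA a, r) := by
  rw [vq_eq]
  simp [Prod.ext_iff, smul_eq_mul]

lemma Xle₁_eq : Xq k l ^ l • e₁ k l = ((Xq k l ^ l : Rq k l), (0 : Rq k l)) := by
  simp [e₁, Prod.ext_iff, smul_eq_mul]

lemma mem_N₁_iff (x : Nq k l) : x ∈ N₁ k l ↔ x.2 ∈ Ideal.span {Xq k l} := by
  constructor
  · intro hx
    induction hx using Submodule.span_induction with
    | mem y hy =>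
      rcases hy with hy | hy
      · rw [hy]; simp [e₁]
      · rw [hy]; simp [e₂, smul_eq_mul]
    | zero => simp
    | add y z _ _ hy hz => simpa using Ideal.add_mem _ hy hz
    | smul r y _ hy => simpa [smul_eq_mul] using Ideal.mul_mem_left _ r hy
  · intro hx
    obtain ⟨r, hr⟩ := Ideal.mem_span_singleton'.mp hx
    have hx2 : x = x.1 • e₁ k l + r • (Xq k l • e₂ k l) := by
      rw [Prod.ext_iff]
      refine ⟨by simp [e₁, e₂, smul_eq_mul], ?_⟩
      simp only [e₁, e₂, Prod.smul_mk, Prod.snd_add, smul_eq_mul, mul_zero, mul_one, zero_add]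
      rw [← hr]
    rw [hx2]
    exact add_mem (Submodule.smul_mem _ _ (Submodule.subset_span (by simp)))
      (Submodule.smul_mem _ _ (Submodule.subset_span (by simp)))

lemma finrank_restrict (P : Submodule (Rq k l) (Nq k l)) :
    Module.finrank k ↥(P.restrictScalars k) = Module.finrank k ↥P :=
  ((Submodule.restrictScalarsEquiv k (Rq k l) (Nq k l) P).restrictScalars k).finrank_eq

lemma restrict_sup (P Q : Submodule (Rq k l) (Nq k l)) :
    (P ⊔ Q).restrictScalars k = P.restrictScalars k ⊔ Q.restrictScalars k := by
  apply le_antisymm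
  · intro x hx
    rw [Submodule.restrictScalars_mem, Submodule.mem_sup] at hx
    obtain ⟨y, hy, z, hz, rfl⟩ := hx
    exact Submodule.mem_sup.mpr ⟨y, hy, z, hz, rfl⟩
  · refine sup_le ?_ ?_ <;> intro x hx
    · exact Submodule.mem_sup_left hx
    · exact Submodule.mem_sup_right hx

lemma finrank_span_vq (a : Fin (l + 1) → k) :
    Module.finrank k ↥(Submodule.span (Rq k l) {vq k l a}) = l + 1 := by
  set f := LinearMap.toSpanSingleton (Rq k l) (Nq k l) (vq k l a) with hf
  have hinj : Function.Injective f := by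
    intro r s hrs
    have h1 := congrArg Prod.snd hrs
    simpa [hf, LinearMap.toSpanSingleton_apply, smul_vq] using h1
  have e := LinearEquiv.ofInjective f hinj
  rw [LinearMap.span_singleton_eq_range]
  rw [← (e.restrictScalars k).finrank_eq]
  exact finrank_Rq

lemma finrank_span_Xle₁ :
    Module.finrank k ↥(Submodule.span (Rq k l) {Xq k l ^ l • e₁ k l}) = 1 := by
  have hr : (Submodule.span (Rq k l) {Xq k l ^ l • e₁ k l}).restrictScalars k =
      Submodule.span k {Xq k l ^ l • e₁ k l} := by
    apply le_antisymm
    · intro x hx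
      rw [Submodule.restrictScalars_mem, Submodule.mem_span_singleton] at hx
      obtain ⟨r, rfl⟩ := hx
      obtain ⟨c, hc⟩ := smul_Xl r
      rw [Submodule.mem_span_singleton]
      refine ⟨c, ?_⟩
      rw [Xle₁_eq, Prod.smul_mk, Prod.smul_mk, Prod.mk.injEq]
      exact ⟨hc.symm, by simp⟩
    · rw [Submodule.span_le]
      intro x hx
      rw [Set.mem_singleton_iff] at hx
      subst hx
      exact Submodule.subset_span rfl
  rw [← finrank_restrict, hr]
  apply finrank_span_singleton
  rw [Xle₁_eq]
  simp [Prod.ext_iff, Xq_pow_l_ne]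

lemma inf_span_eq_bot (a : Fin (l + 1) → k) :
    Submodule.span (Rq k l) {vq k l a} ⊓ Submodule.span (Rq k l) {Xq k l ^ l • e₁ k l} = ⊥ := by
  rw [eq_bot_iff]
  rintro x ⟨hx1, hx2⟩
  rw [SetLike.mem_coe, Submodule.mem_span_singleton] at hx1 hx2
  obtain ⟨r, hr⟩ := hx1
  obtain ⟨s, hs⟩ := hx2
  have h2 : x.2 = r := by rw [← hr, smul_vq]
  have h2' : x.2 = 0 := by rw [← hs, Xle₁_eq]; simp [smul_eq_mul]
  have hr0 : r = 0 := by rw [← h2, h2']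
  rw [Submodule.mem_bot, ← hr, hr0]
  exact zero_smul (Rq k l) (vq k l a)

lemma finrank_sup_eq (a : Fin (l + 1) → k) :
    Module.finrank k ↥(Submodule.span (Rq k l) {vq k l a} ⊔
      Submodule.span (Rq k l) {Xq k l ^ l • e₁ k l}) = l + 2 := by
  rw [← finrank_restrict, restrict_sup]
  have h := Submodule.finrank_sup_add_finrank_inf_eq
    ((Submodule.span (Rq k l) {vq k l a}).restrictScalars k)
    ((Submodule.span (Rq k l) {Xq k l ^ l • e₁ k l}).restrictScalars k)
  have hinf : (Submodule.span (Rq k l) {vq k l a}).restrictScalars k ⊓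
      (Submodule.span (Rq k l) {Xq k l ^ l • e₁ k l}).restrictScalars k = ⊥ := by
    rw [← Submodule.restrictScalars_bot (S := k) (R := Rq k l) (M := Nq k l)]
    rw [show ((⊥ : Submodule (Rq k l) (Nq k l))) = Submodule.span (Rq k l) {vq k l a} ⊓
      Submodule.span (Rq k l) {Xq k l ^ l • e₁ k l} from (inf_span_eq_bot a).symm]
    apply le_antisymm
    · rintro x ⟨hx1, hx2⟩
      exact ⟨hx1, hx2⟩
    · rintro x hx
      exact ⟨hx.1, hx.2⟩
  rw [hinf] at h
  rw [finrank_restrict, finrank_restrict, finrank_span_vq, finrank_span_Xle₁] at h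
  simpa using h

lemma quot_cyclic {L : Submodule (Rq k l) (Nq k l)} {a : Fin (l + 1) → k}
    (hv : vq k l a ∈ L) : ∃ x : Nq k l ⧸ L, Submodule.span (Rq k l) {x} = ⊤ := by
  refine ⟨Submodule.Quotient.mk (e₁ k l), ?_⟩
  rw [Submodule.eq_top_iff']
  intro y
  obtain ⟨n, rfl⟩ := Submodule.Quotient.mk_surjective L y
  rw [Submodule.mem_span_singleton]
  refine ⟨n.1 - n.2 * pA a, ?_⟩
  rw [← Submodule.Quotient.mk_smul, Submodule.Quotient.eq]
  have : (n.1 - n.2 * pA a) • e₁ k l - n = (-n.2) • vq k l a := by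
    rw [smul_vq, Prod.ext_iff, e₁]
    constructor
    · simp [smul_eq_mul]; ring
    · simp [smul_eq_mul]
  rw [this]
  exact L.smul_mem _ hv

lemma pA_def (a : Fin (l + 1) → k) :
    pA a = ∑ i : Fin (l + 1), a i • Xq k l ^ (i : ℕ) := rfl

lemma smul_e₁ (d : Rq k l) : d • e₁ k l = (d, 0) := by
  simp [e₁, Prod.ext_iff, smul_eq_mul]

variable (k l)

/-- The paper's Lemma `LemmaNeq`: for `R`-submodules `L ⊆ L'` of `N = R²`,
`R = k[X]/(X^(l+1))`, the conditions `dim_k L = l+1`, `dim_k L' = l+2`, `N/L` and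
`N/L'` cyclic, `L ⊄ N₁` hold if and only if `L = R·v` and `L' = L + ⟨X^l e₁⟩` for
the vector `v = e₂ + (a₀ + ⋯ + a_lX^l)e₁` attached to some scalars `a₀, …, a_l ∈ k`;
moreover the scalars are uniquely determined by `(L, L')`, and `L'` is uniquely
determined by `L`. -/
theorem flag_parametrization (L L' : Submodule (Rq k l) (Nq k l)) (hLL' : L ≤ L') :
    ((Module.finrank k ↥L = l + 1 ∧ Module.finrank k ↥L' = l + 2 ∧
      (∃ x : Nq k l ⧸ L, Submodule.span (Rq k l) {x} = ⊤) ∧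
      (∃ x : Nq k l ⧸ L', Submodule.span (Rq k l) {x} = ⊤) ∧
      ¬ L ≤ N₁ k l) ↔
     (∃ a : Fin (l + 1) → k,
        L = Submodule.span (Rq k l) {vq k l a} ∧
        L' = Submodule.span (Rq k l) {vq k l a} ⊔
          Submodule.span (Rq k l) {Xq k l ^ l • e₁ k l})) ∧
    (∀ a b : Fin (l + 1) → k,
      (L = Submodule.span (Rq k l) {vq k l a} ∧
        L' = Submodule.span (Rq k l) {vq k l a} ⊔
          Submodule.span (Rq k l) {Xq k l ^ l • e₁ k l}) →
      (L = Submodule.span (Rq k l) {vq k l b} ∧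
        L' = Submodule.span (Rq k l) {vq k l b} ⊔
          Submodule.span (Rq k l) {Xq k l ^ l • e₁ k l}) →
      a = b) ∧
    (∀ L₁ L₂ : Submodule (Rq k l) (Nq k l),
      (∃ a : Fin (l + 1) → k,
        L = Submodule.span (Rq k l) {vq k l a} ∧
        L₁ = Submodule.span (Rq k l) {vq k l a} ⊔
          Submodule.span (Rq k l) {Xq k l ^ l • e₁ k l}) →
      (∃ a : Fin (l + 1) → k,
        L = Submodule.span (Rq k l) {vq k l a} ∧
        L₂ = Submodule.span (Rq k l) {vq k l a} ⊔
          Submodule.span (Rq k l) {Xq k l ^ l • e₁ k l}) →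
      L₁ = L₂) := by
  refine ⟨⟨?_, ?_⟩, ?_, ?_⟩
  · rintro ⟨hdL, hdL', -, -, hN₁⟩
    rw [SetLike.not_le_iff_exists] at hN₁
    obtain ⟨w, hwL, hwN₁⟩ := hN₁
    have hw2 : w.2 ∉ Ideal.span {Xq k l} := fun h => hwN₁ ((mem_N₁_iff w).mpr h)
    obtain ⟨h, hh⟩ := exists_inv hw2
    obtain ⟨a, ha⟩ := sum_repr (h * w.1)
    have hva : vq k l a = h • w := by
      rw [vq_eq, Prod.ext_iff]
      exact ⟨by rw [pA_def]; exact ha.symm, hh.symm⟩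
    have hvL : vq k l a ∈ L := by rw [hva]; exact L.smul_mem h hwL
    have hspanL : Submodule.span (Rq k l) {vq k l a} ≤ L := by
      rw [Submodule.span_le, Set.singleton_subset_iff]; exact hvL
    have hLeq : L = Submodule.span (Rq k l) {vq k l a} := by
      symm
      apply Submodule.restrictScalars_injective k (Rq k l) (Nq k l)
      apply Submodule.eq_of_le_of_finrank_le
      · exact fun x hx => hspanL hx
      · rw [finrank_restrict, finrank_restrict, hdL, finrank_span_vq]
    refine ⟨a, hLeq, ?_⟩
    have hex : ∃ u ∈ L', u ∉ L := by
      by_contra hcon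
      push_neg at hcon
      have heq : L' = L := le_antisymm hcon hLL'
      rw [heq, hdL] at hdL'
      omega
    obtain ⟨u, huL', huL⟩ := hex
    set d := u.1 - u.2 * pA a with hd
    have hde : u - u.2 • vq k l a = d • e₁ k l := by
      rw [smul_vq, smul_e₁, Prod.ext_iff]
      exact ⟨by simp [hd], by simp⟩
    have hdmem : d • e₁ k l ∈ L' := by
      rw [← hde]
      exact sub_mem huL' (L'.smul_mem _ (hLL' hvL))
    have hd0 : d ≠ 0 := by
      intro h0
      apply huL
      have hu : u = u.2 • vq k l a := by
        have h2 := hde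
        rw [h0, smul_e₁] at h2
        have h3 : u - u.2 • vq k l a = 0 := by rw [h2]; rfl
        exact sub_eq_zero.mp h3
      rw [hu]
      exact L.smul_mem _ hvL
    obtain ⟨r, hr⟩ := exists_mul_Xl hd0
    have hXmem : Xq k l ^ l • e₁ k l ∈ L' := by
      have h2 := L'.smul_mem r hdmem
      have h3 : r • d • e₁ k l = Xq k l ^ l • e₁ k l := by
        rw [smul_e₁, smul_e₁, Prod.smul_mk, Prod.mk.injEq]
        exact ⟨hr, by simp⟩
      rwa [h3] at h2
    symm
    apply Submodule.restrictScalars_injective k (Rq k l) (Nq k l)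
    apply Submodule.eq_of_le_of_finrank_le
    · intro x hx
      exact (sup_le (Submodule.span_le.mpr (Set.singleton_subset_iff.mpr (hLL' hvL)))
        (Submodule.span_le.mpr (Set.singleton_subset_iff.mpr hXmem))) hx
    · rw [finrank_restrict, finrank_restrict, hdL', finrank_sup_eq]
  · rintro ⟨a, rfl, rfl⟩
    refine ⟨finrank_span_vq a, finrank_sup_eq a,
      quot_cyclic (Submodule.mem_span_singleton_self _),
      quot_cyclic (Submodule.mem_sup_left (Submodule.mem_span_singleton_self _)), ?_⟩
    intro hle
    have hv : vq k l a ∈ N₁ k l := hle (Submodule.mem_span_singleton_self _)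
    rw [mem_N₁_iff, vq_eq] at hv
    exact one_not_mem_span_Xq hv
  · rintro a b ⟨haL, -⟩ ⟨hbL, -⟩
    have hsp : vq k l b ∈ Submodule.span (Rq k l) {vq k l a} := by
      rw [← haL, hbL]; exact Submodule.mem_span_singleton_self _
    obtain ⟨r, hr⟩ := Submodule.mem_span_singleton.mp hsp
    rw [smul_vq, vq_eq, Prod.mk.injEq] at hr
    obtain ⟨h1, h2⟩ := hr
    rw [h2, one_mul] at h1
    apply repr_inj
    rw [← pA_def, ← pA_def]
    exact h1
  · rintro L₁ L₂ ⟨a, haL, haL₁⟩ ⟨b, hbL, hbL₂⟩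
    rw [haL₁, hbL₂, ← haL, ← hbL]

end ADLV
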